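/- Suppose (A,B) is uncontrollable, where A, B are as in the '1+n' mixed platoon. Then there exist λ ∈ ℂ and a nonzero vector ρ = (ρ₀₁,ρ₀₂,ρ₁₁,ρ₁₂,…,ρₙ₁,ρₙ₂) with ρᵀA = λρᵀ and ρᵀB = 0, and these conditions force ρ₀₂ = 0, (λ² + α₂λ + α₁)ρᵢ₁ = (α₃λ + α₁)ρ₍ᵢ₊₁₎₁ for i = 1,…,n-1, (α₃λ + α₁)ρ₁₁ = 0, and (λ² + α₂λ + α₁)ρₙ₁ = 0. -/

import Mathlib

set_option maxRecDepth 10000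

def platoonA (α₁ α₂ α₃ : ℝ) (n : ℕ) : Matrix (Fin (2 * n + 2)) (Fin (2 * n + 2)) ℝ :=
  Matrix.of fun i j =>
    if i.val = 0 ∧ j.val = 1 then 1
    else if 2 ≤ i.val ∧ i.val % 2 = 0 ∧ j.val = i.val + 1 then -1
    else if 2 ≤ i.val ∧ i.val % 2 = 0 ∧ j.val + 1 = i.val then 1
    else if 3 ≤ i.val ∧ i.val % 2 = 1 ∧ j.val + 1 = i.val then α₁
    else if 3 ≤ i.val ∧ i.val % 2 = 1 ∧ j.val = i.val then -α₂
    else if 3 ≤ i.val ∧ i.val % 2 = 1 ∧ j.val + 2 = i.val then α₃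
    else 0

noncomputable def platoonAC (α₁ α₂ α₃ : ℝ) (n : ℕ) :
    Matrix (Fin (2 * n + 2)) (Fin (2 * n + 2)) ℂ :=
  (platoonA α₁ α₂ α₃ n).map (fun x => (x : ℂ))

/-- Complexified input vector `B` (a `1` in the second entry). -/
def platoonBC (n : ℕ) : Fin (2 * n + 2) → ℂ := fun i => if i.val = 1 then 1 else 0

noncomputable def PBH (α₁ α₂ α₃ : ℝ) (n : ℕ) (l : ℂ) :
    Matrix (Fin (2 * n + 2)) (Fin (2 * n + 2 + 1)) ℂ :=
  Matrix.of fun i j =>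
    if h : j.val < 2 * n + 2 then
      (l • (1 : Matrix (Fin (2 * n + 2)) (Fin (2 * n + 2)) ℂ)
        - platoonAC α₁ α₂ α₃ n) i ⟨j.val, h⟩
    else if i.val = 1 then 1 else 0

section ColLemmas

variable (α₁ α₂ α₃ : ℝ) (n : ℕ)

lemma AC_col0 (i j : Fin (2*n+2)) (hj : j.val = 0) :
    platoonAC α₁ α₂ α₃ n i j = 0 := by
  obtain ⟨iv, hi⟩ := i; obtain ⟨jv, hjv⟩ := j
  simp only at hj; subst hj
  simp only [platoonAC, platoonA, Matrix.map_apply, Matrix.of_apply, Fin.mk.injEq]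
  split_ifs
  all_goals try (exfalso; omega)
  all_goals try (push_cast; ring)
  all_goals try norm_num
  all_goals try (exfalso; simp_all)
  all_goals simp_all

lemma AC_col1 (hn : 1 ≤ n) (i j : Fin (2*n+2)) (hj : j.val = 1) :
    platoonAC α₁ α₂ α₃ n i j =
      (if i = (⟨0, by omega⟩ : Fin (2*n+2)) then 1 else 0)
    + (if i = (⟨2, by omega⟩ : Fin (2*n+2)) then 1 else 0)
    + (if i = (⟨3, by omega⟩ : Fin (2*n+2)) then (α₃:ℂ) else 0) := by
  obtain ⟨iv, hi⟩ := i; obtain ⟨jv, hjv⟩ := j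
  simp only at hj; subst hj
  simp only [platoonAC, platoonA, Matrix.map_apply, Matrix.of_apply, Fin.mk.injEq]
  split_ifs
  all_goals try (exfalso; omega)
  all_goals try (push_cast; ring)
  all_goals try norm_num
  all_goals try (exfalso; simp_all)
  all_goals simp_all

lemma AC_col_even (k : ℕ) (hk : 1 ≤ k) (hkn : k ≤ n) (i j : Fin (2*n+2)) (hj : j.val = 2*k) :
    platoonAC α₁ α₂ α₃ n i j =
      (if i = (⟨2*k+1, by omega⟩ : Fin (2*n+2)) then (α₁:ℂ) else 0) := by
  obtain ⟨iv, hi⟩ := i; obtain ⟨jv, hjv⟩ := j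
  simp only at hj; subst hj
  simp only [platoonAC, platoonA, Matrix.map_apply, Matrix.of_apply, Fin.mk.injEq]
  split_ifs
  all_goals try (exfalso; omega)
  all_goals try (push_cast; ring)
  all_goals try norm_num
  all_goals try (exfalso; simp_all)
  all_goals simp_all

lemma AC_col_odd (k : ℕ) (hk : 1 ≤ k) (hkn : k + 1 ≤ n) (i j : Fin (2*n+2))
    (hj : j.val = 2*k+1) :
    platoonAC α₁ α₂ α₃ n i j =
      (if i = (⟨2*k, by omega⟩ : Fin (2*n+2)) then -1 else 0)
    + (if i = (⟨2*k+1, by omega⟩ : Fin (2*n+2)) then -(α₂:ℂ) else 0)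
    + (if i = (⟨2*k+2, by omega⟩ : Fin (2*n+2)) then 1 else 0)
    + (if i = (⟨2*k+3, by omega⟩ : Fin (2*n+2)) then (α₃:ℂ) else 0) := by
  obtain ⟨iv, hi⟩ := i; obtain ⟨jv, hjv⟩ := j
  simp only at hj; subst hj
  simp only [platoonAC, platoonA, Matrix.map_apply, Matrix.of_apply, Fin.mk.injEq]
  split_ifs
  all_goals try (exfalso; omega)
  all_goals try (push_cast; ring)
  all_goals try norm_num
  all_goals try (exfalso; simp_all)
  all_goals simp_all

lemma AC_col_last (hn : 1 ≤ n) (i j : Fin (2*n+2)) (hj : j.val = 2*n+1) :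
    platoonAC α₁ α₂ α₃ n i j =
      (if i = (⟨2*n, by omega⟩ : Fin (2*n+2)) then -1 else 0)
    + (if i = (⟨2*n+1, by omega⟩ : Fin (2*n+2)) then -(α₂:ℂ) else 0) := by
  obtain ⟨iv, hi⟩ := i; obtain ⟨jv, hjv⟩ := j
  simp only at hj; subst hj
  simp only [platoonAC, platoonA, Matrix.map_apply, Matrix.of_apply, Fin.mk.injEq]
  split_ifs
  all_goals try (exfalso; omega)
  all_goals try (push_cast; ring)
  all_goals try norm_num
  all_goals try (exfalso; simp_all)
  all_goals simp_all

end ColLemmas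

lemma rank_lt_exists_vecMul_zero {m k : ℕ} (M : Matrix (Fin m) (Fin k) ℂ) (h : M.rank ≠ m) :
    ∃ ρ : Fin m → ℂ, ρ ≠ 0 ∧ Matrix.vecMul ρ M = 0 := by
  have hle : M.rank ≤ m := le_trans (Matrix.rank_le_card_height M) (by simp)
  have hlt : M.rank < m := lt_of_le_of_ne hle h
  have ht : (Matrix.transpose M).rank < m := by rwa [Matrix.rank_transpose]
  have hrn := LinearMap.finrank_range_add_finrank_ker (Matrix.transpose M).mulVecLin
  rw [Module.finrank_fintype_fun_eq_card] at hrn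
  have hker : 0 < Module.finrank ℂ (LinearMap.ker (Matrix.transpose M).mulVecLin) := by
    have : (Matrix.transpose M).rank
        = Module.finrank ℂ (LinearMap.range (Matrix.transpose M).mulVecLin) := rfl
    simp [Fintype.card_fin] at hrn
    omega
  obtain ⟨⟨x, hx⟩, hxne⟩ := Module.finrank_pos_iff_exists_ne_zero.mp hker
  refine ⟨x, ?_, ?_⟩
  · simpa [Submodule.mk_eq_zero] using hxne
  · rw [← Matrix.mulVec_transpose]
    exact hx

/-- If the `1+n` platoon pair `(A, B)` is uncontrollable (PBH rank test fails for
some eigenvalue), then there is a nonzero left eigenvector `ρ` with `ρᵀA = λρᵀ`,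
`ρᵀB = 0`, and these conditions force `ρ₀₂ = 0`,
`(λ² + α₂λ + α₁)ρᵢ₁ = (α₃λ + α₁)ρ₍ᵢ₊₁₎₁` for `i = 1,…,n-1`,
`(α₃λ + α₁)ρ₁₁ = 0`, and `(λ² + α₂λ + α₁)ρₙ₁ = 0`.
Here `ρ₀₁ = ρ 0`, `ρ₀₂ = ρ 1`, and `ρᵢ₁ = ρ (2i)`, `ρᵢ₂ = ρ (2i+1)`. -/
theorem platoon_uncontrollable_left_eigenvector (α₁ α₂ α₃ : ℝ) (n : ℕ) (hn : 1 ≤ n)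
    (hunc : ¬ (∀ l : ℂ, l ∈ spectrum ℂ (platoonAC α₁ α₂ α₃ n) →
      (PBH α₁ α₂ α₃ n l).rank = 2 * n + 2)) :
    ∃ (l : ℂ) (ρ : Fin (2 * n + 2) → ℂ), ρ ≠ 0 ∧
      Matrix.vecMul ρ (platoonAC α₁ α₂ α₃ n) = l • ρ ∧
      dotProduct ρ (platoonBC n) = 0 ∧
      ρ 1 = 0 ∧
      (∀ i : ℕ, 1 ≤ i → i + 1 ≤ n → ∀ (h2i : 2 * i < 2 * n + 2) (h2i2 : 2 * i + 2 < 2 * n + 2),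
        (l ^ 2 + (α₂ : ℂ) * l + (α₁ : ℂ)) * ρ ⟨2 * i, h2i⟩ =
          ((α₃ : ℂ) * l + (α₁ : ℂ)) * ρ ⟨2 * i + 2, h2i2⟩) ∧
      (∀ h2 : 2 < 2 * n + 2, ((α₃ : ℂ) * l + (α₁ : ℂ)) * ρ ⟨2, h2⟩ = 0) ∧
      (∀ h2n : 2 * n < 2 * n + 2,
        (l ^ 2 + (α₂ : ℂ) * l + (α₁ : ℂ)) * ρ ⟨2 * n, h2n⟩ = 0) := by
  push_neg at hunc
  obtain ⟨l, -, hrank⟩ := hunc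
  obtain ⟨ρ, hρne, hnull⟩ := rank_lt_exists_vecMul_zero (PBH α₁ α₂ α₃ n l) hrank
  -- the last column gives ρ 1 = 0
  have hρ1 : ρ ⟨1, by omega⟩ = 0 := by
    have h := congrFun hnull ⟨2*n+2, by omega⟩
    simp only [Matrix.vecMul, dotProduct, PBH, Matrix.of_apply, Pi.zero_apply] at h
    rw [Finset.sum_congr rfl (fun i _ => by
      rw [dif_neg (by simp), show (if (i:Fin (2*n+2)).val = 1 then (1:ℂ) else 0)
        = (if i = (⟨1, by omega⟩ : Fin (2*n+2)) then (1:ℂ) else 0) from by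
          simp [Fin.ext_iff]])] at h
    simp only [mul_ite, mul_one, mul_zero, Finset.sum_ite_eq', Finset.mem_univ, if_true] at h
    exact h
  -- the other columns give the left-eigenvector equation
  have hEig : Matrix.vecMul ρ (platoonAC α₁ α₂ α₃ n) = l • ρ := by
    have hsub : Matrix.vecMul ρ
        (l • (1 : Matrix (Fin (2*n+2)) (Fin (2*n+2)) ℂ) - platoonAC α₁ α₂ α₃ n) = 0 := by
      funext j
      have h := congrFun hnull ⟨j.val, by omega⟩
      simp only [Matrix.vecMul, dotProduct, PBH, Matrix.of_apply, Pi.zero_apply] at h ⊢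
      rw [Finset.sum_congr rfl (fun i _ => by rw [dif_pos j.isLt])] at h
      simpa [Fin.eta] using h
    rw [Matrix.vecMul_sub, sub_eq_zero] at hsub
    rw [← hsub]
    funext j
    simp [Matrix.vecMul, dotProduct, Matrix.one_apply, mul_ite, mul_comm,
      Finset.sum_ite_eq']
  have comp : ∀ j : Fin (2*n+2),
      (∑ i, ρ i * platoonAC α₁ α₂ α₃ n i j) = l * ρ j := by
    intro j
    have h := congrFun hEig j
    simpa [Matrix.vecMul, dotProduct] using h
  have hsum : ∀ (a : Fin (2*n+2)) (v : ℂ),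
      (∑ i, ρ i * (if i = a then v else 0)) = ρ a * v := by
    intro a v
    rw [Finset.sum_congr rfl (fun i _ => by rw [mul_ite, mul_zero])]
    simp [Finset.sum_ite_eq']
  -- component equations
  have E0 : l * ρ ⟨0, by omega⟩ = 0 := by
    have h := comp ⟨0, by omega⟩
    rw [Finset.sum_congr rfl (fun i _ => by
      rw [AC_col0 α₁ α₂ α₃ n i _ rfl, mul_zero])] at h
    simpa using h.symm
  have E1 : ρ ⟨0, by omega⟩ * 1 + ρ ⟨2, by omega⟩ * 1 + ρ ⟨3, by omega⟩ * (α₃:ℂ)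
      = l * ρ ⟨1, by omega⟩ := by
    have h := comp ⟨1, by omega⟩
    rw [Finset.sum_congr rfl (fun i _ => by
      rw [AC_col1 α₁ α₂ α₃ n hn i _ rfl, mul_add, mul_add])] at h
    rw [Finset.sum_add_distrib, Finset.sum_add_distrib, hsum, hsum, hsum] at h
    exact h
  have E2 : ∀ k : ℕ, 1 ≤ k → k ≤ n → ∀ (h1 : 2*k+1 < 2*n+2) (h0 : 2*k < 2*n+2),
      ρ ⟨2*k+1, h1⟩ * (α₁:ℂ) = l * ρ ⟨2*k, h0⟩ := by
    intro k hk hkn h1 h0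
    have h := comp ⟨2*k, h0⟩
    rw [Finset.sum_congr rfl (fun i _ => by
      rw [AC_col_even α₁ α₂ α₃ n k hk hkn i _ rfl])] at h
    rw [hsum] at h
    exact h
  have E3 : ∀ k : ℕ, 1 ≤ k → k + 1 ≤ n →
      ∀ (p0 : 2*k < 2*n+2) (p1 : 2*k+1 < 2*n+2) (p2 : 2*k+2 < 2*n+2) (p3 : 2*k+3 < 2*n+2),
      ρ ⟨2*k, p0⟩ * (-1) + ρ ⟨2*k+1, p1⟩ * (-(α₂:ℂ)) + ρ ⟨2*k+2, p2⟩ * 1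
        + ρ ⟨2*k+3, p3⟩ * (α₃:ℂ) = l * ρ ⟨2*k+1, p1⟩ := by
    intro k hk hkn p0 p1 p2 p3
    have h := comp ⟨2*k+1, p1⟩
    rw [Finset.sum_congr rfl (fun i _ => by
      rw [AC_col_odd α₁ α₂ α₃ n k hk hkn i _ rfl, mul_add, mul_add, mul_add])] at h
    rw [Finset.sum_add_distrib, Finset.sum_add_distrib, Finset.sum_add_distrib,
      hsum, hsum, hsum, hsum] at h
    exact h
  have E4 : ρ ⟨2*n, by omega⟩ * (-1) + ρ ⟨2*n+1, by omega⟩ * (-(α₂:ℂ))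
      = l * ρ ⟨2*n+1, by omega⟩ := by
    have h := comp ⟨2*n+1, by omega⟩
    rw [Finset.sum_congr rfl (fun i _ => by
      rw [AC_col_last α₁ α₂ α₃ n hn i _ rfl, mul_add])] at h
    rw [Finset.sum_add_distrib, hsum, hsum] at h
    exact h
  -- the three structural conclusions
  have G1 : ∀ i : ℕ, 1 ≤ i → i + 1 ≤ n →
      ∀ (h2i : 2 * i < 2 * n + 2) (h2i2 : 2 * i + 2 < 2 * n + 2),
      (l ^ 2 + (α₂ : ℂ) * l + (α₁ : ℂ)) * ρ ⟨2 * i, h2i⟩ =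
        ((α₃ : ℂ) * l + (α₁ : ℂ)) * ρ ⟨2 * i + 2, h2i2⟩ := by
    intro i hi hin h2i h2i2
    have e2a := E2 i hi (by omega) (by omega) h2i
    have e2b := E2 (i+1) (by omega) (by omega) (by omega) (by omega)
    have e3 := E3 i hi hin h2i (by omega) h2i2 (by omega)
    have hix : (⟨2*(i+1), by omega⟩ : Fin (2*n+2)) = ⟨2*i+2, h2i2⟩ := by
      simp [Fin.mk.injEq]; omega
    have hix2 : (⟨2*(i+1)+1, by omega⟩ : Fin (2*n+2)) = ⟨2*i+3, by omega⟩ := by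
      simp [Fin.mk.injEq]; omega
    rw [hix, hix2] at e2b
    linear_combination (-((α₂:ℂ)+l)) * e2a + (α₃:ℂ) * e2b + (-(α₁:ℂ)) * e3
  have G3 : ∀ h2n : 2 * n < 2 * n + 2,
      (l ^ 2 + (α₂ : ℂ) * l + (α₁ : ℂ)) * ρ ⟨2 * n, h2n⟩ = 0 := by
    intro h2n
    have e2 := E2 n hn (le_refl n) (by omega) h2n
    linear_combination (-((α₂:ℂ)+l)) * e2 + (-(α₁:ℂ)) * E4
  have G2 : ∀ h2 : 2 < 2 * n + 2, ((α₃ : ℂ) * l + (α₁ : ℂ)) * ρ ⟨2, h2⟩ = 0 := by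
    intro h2
    by_cases hl : l = 0
    · subst hl
      -- chain: α₁ ρ(2k) = α₁ ρ(2k+2), and α₁ ρ(2n) = 0
      have key : ∀ d k : ℕ, k + d = n → 1 ≤ k → ∀ (hk : 2*k < 2*n+2),
          (α₁:ℂ) * ρ ⟨2*k, hk⟩ = 0 := by
        intro d
        induction d with
        | zero =>
          intro k hkd hk1 hk
          have hkn : k = n := by omega
          subst hkn
          have := G3 hk
          linear_combination this
        | succ d ih =>
          intro k hkd hk1 hk
          have h1 := G1 k hk1 (by omega) hk (by omega)
          have h2' := ih (k+1) (by omega) (by omega) (by omega)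
          have hix : (⟨2*(k+1), by omega⟩ : Fin (2*n+2)) = ⟨2*k+2, by omega⟩ := by
            simp [Fin.mk.injEq]; omega
          rw [hix] at h2'
          linear_combination h1 + h2'
      have := key (n-1) 1 (by omega) (le_refl 1) (by omega)
      have hix : (⟨2*1, by omega⟩ : Fin (2*n+2)) = ⟨2, h2⟩ := by
        simp [Fin.mk.injEq]
      rw [hix] at this
      linear_combination this
    · have hρ0 : ρ ⟨0, by omega⟩ = 0 := by
        rcases mul_eq_zero.mp E0 with h | h
        · exact absurd h hl
        · exact h
      have e2 := E2 1 (le_refl 1) hn (by omega) (by omega)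
      have hix : (⟨2*1, by omega⟩ : Fin (2*n+2)) = ⟨2, h2⟩ := by
        simp [Fin.mk.injEq]
      have hix2 : (⟨2*1+1, by omega⟩ : Fin (2*n+2)) = ⟨3, by omega⟩ := by
        simp [Fin.mk.injEq]
      rw [hix, hix2] at e2
      linear_combination (α₁:ℂ) * E1 + (-(α₃:ℂ)) * e2 + ((α₁:ℂ)*l) * hρ1
        + (-(α₁:ℂ)) * hρ0
  -- ρ 1 = 0 in the `OfNat` form, and the dot product with B
  have h1fin : (1 : Fin (2*n+2)) = ⟨1, by omega⟩ := by
    apply Fin.ext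
    simp [Fin.val_one']
    try omega
  have hdot : dotProduct ρ (platoonBC n) = 0 := by
    simp only [dotProduct, platoonBC]
    rw [Finset.sum_congr rfl (fun i _ => by
      rw [show (if (i:Fin (2*n+2)).val = 1 then (1:ℂ) else 0)
        = (if i = (⟨1, by omega⟩ : Fin (2*n+2)) then (1:ℂ) else 0) from by
          simp [Fin.ext_iff]])]
    rw [hsum, hρ1, zero_mul]
  exact ⟨l, ρ, hρne, hEig, hdot, by rw [h1fin]; exact hρ1, G1, G2, G3⟩
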